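/- Let K ≥ 1 be an integer, P > 0, and let h_1 ≥ h_2 ≥ ... ≥ h_K > 0 be channel gains. For a power vector p ∈ ℝ^K with p_k ≥ 0 and Σ_{k=1}^K p_k ≤ P, define R_k(p) = log((1 + h_k Σ_{j=1}^{k} p_j)/(1 + h_k Σ_{j=1}^{k-1} p_j)). Let θ_J ≥ 0 be a weight for each nonempty subset J ⊆ {1,...,K}, and let Γ be the set of all vectors r = (r_J)_{J nonempty, J ⊆ {1,...,K}} with r_J ≥ 0 for which there exists such a p with Σ_{J : max J = k} r_J ≤ R_k(p) for every k = 1,...,K. Then sup_{r ∈ Γ} Σ_J θ_J r_J = ∫_0^P max_{1 ≤ k ≤ K} θ̃_k/(1/h_k + z) dz, where θ̃_k = max { θ_J : J ⊆ {1,...,K}, max J = k }. -/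

import Mathlib

/-- single-crossing lemma -/
lemma stmt17_cross {a b tj tk z1 z2 : ℝ} (ha : 0 < a) (hab : a ≤ b)
    (htj : 0 ≤ tj) (htk : 0 ≤ tk) (hz1 : 0 ≤ z1) (hz12 : z1 ≤ z2)
    (hle : tj / (a + z1) ≤ tk / (b + z1)) :
    tj / (a + z2) ≤ tk / (b + z2) := by
  have ha1 : 0 < a + z1 := by linarith
  have hb1 : 0 < b + z1 := by linarith
  have ha2 : 0 < a + z2 := by linarith
  have hb2 : 0 < b + z2 := by linarith
  rw [div_le_div_iff₀ ha1 hb1] at hle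
  rw [div_le_div_iff₀ ha2 hb2]
  have hjk : tj ≤ tk := by nlinarith
  nlinarith [mul_le_mul_of_nonneg_right hjk (sub_nonneg.2 hz12)]

/-- integral of t/(c+z) -/
lemma stmt17_int {c t : ℝ} (hc : 0 < c) {a b : ℝ} (ha : 0 ≤ a) (hb : 0 ≤ b) :
    ∫ z in a..b, t / (c + z) = t * (Real.log (c + b) - Real.log (c + a)) := by
  have key : ∀ x ∈ Set.uIcc a b, HasDerivAt (fun z => t * Real.log (c + z)) (t / (c + x)) x := by
    intro x hx
    have hx0 : 0 ≤ x := le_trans (le_min ha hb) hx.1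
    have hcx : c + x ≠ 0 := by positivity
    have h1 : HasDerivAt (fun z : ℝ => c + z) 1 x := (hasDerivAt_id x).const_add c
    have h2 := (Real.hasDerivAt_log hcx).comp x h1
    simpa [mul_comm, div_eq_mul_inv, mul_assoc] using h2.const_mul t
  have hint : IntervalIntegrable (fun z => t / (c + z)) MeasureTheory.volume a b := by
    apply ContinuousOn.intervalIntegrable
    apply ContinuousOn.div continuousOn_const (by fun_prop)
    intro x hx
    have hx0 : 0 ≤ x := le_trans (le_min ha hb) hx.1
    positivity
  rw [intervalIntegral.integral_eq_sub_of_hasDerivAt key hint]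
  ring

lemma stmt17_logdiv {h a b : ℝ} (hh : 0 < h) (ha : 0 ≤ a) (hb : 0 ≤ b) :
    Real.log ((1 + h * b) / (1 + h * a))
      = Real.log (1 / h + b) - Real.log (1 / h + a) := by
  have h1 : (0:ℝ) < 1 + h * a := by positivity
  have h2 : (0:ℝ) < 1 + h * b := by positivity
  have e1 : 1 + h * a = h * (1 / h + a) := by field_simp
  have e2 : 1 + h * b = h * (1 / h + b) := by field_simp
  rw [Real.log_div (ne_of_gt h2) (ne_of_gt h1), e1, e2,
    Real.log_mul (ne_of_gt hh) (by positivity), Real.log_mul (ne_of_gt hh) (by positivity)]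
  ring

lemma stmt17_tele {K : ℕ} (W : ℕ → ℝ) :
    ∀ n, n ≤ K → ∑ j ∈ Finset.univ.filter (fun j : Fin K => (j : ℕ) < n),
      (W ((j : ℕ) + 1) - W (j : ℕ)) = W n - W 0 := by
  intro n
  induction n with
  | zero => intro _; simp
  | succ m ih =>
    intro hm
    have hmK : m < K := hm
    have hset : Finset.univ.filter (fun j : Fin K => (j : ℕ) < m + 1)
        = insert ⟨m, hmK⟩ (Finset.univ.filter (fun j : Fin K => (j : ℕ) < m)) := by
      ext j
      simp only [Finset.mem_filter, Finset.mem_univ, true_and, Finset.mem_insert,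
        Fin.ext_iff, Nat.lt_succ_iff_lt_or_eq]
      tauto
    rw [hset, Finset.sum_insert (by simp), ih (le_of_lt hm)]
    ring

lemma stmt17_split (f : ℝ → ℝ) {P : ℝ} (hf : ContinuousOn f (Set.Icc 0 P))
    (K : ℕ) (W : ℕ → ℝ) (hW : ∀ n, n ≤ K → 0 ≤ W n ∧ W n ≤ P) :
    ∑ i ∈ Finset.range K, ∫ z in (W i)..(W (i + 1)), f z = ∫ z in (W 0)..(W K), f z := by
  have hInt : ∀ n, n ≤ K → IntervalIntegrable f MeasureTheory.volume 0 (W n) := by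
    intro n hn
    apply (hf.mono ?_).intervalIntegrable
    rw [Set.uIcc_of_le (hW n hn).1]
    exact Set.Icc_subset_Icc le_rfl (hW n hn).2
  have key : ∀ i ∈ Finset.range K,
      ∫ z in (W i)..(W (i + 1)), f z
        = (∫ z in (0:ℝ)..W (i+1), f z) - ∫ z in (0:ℝ)..W i, f z := by
    intro i hi
    rw [Finset.mem_range] at hi
    exact (intervalIntegral.integral_interval_sub_left (hInt (i+1) hi) (hInt i (le_of_lt hi))).symm
  rw [Finset.sum_congr rfl key, Finset.sum_range_sub (fun n => ∫ z in (0:ℝ)..W n, f z)]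
  exact intervalIntegral.integral_interval_sub_left (hInt K le_rfl) (hInt 0 (Nat.zero_le K))

section stmt17aux

variable {K : ℕ} (hK : 1 ≤ K) (h θt : Fin K → ℝ)

noncomputable def sg (k : Fin K) (z : ℝ) : ℝ := θt k / (1 / h k + z)

noncomputable def sF (z : ℝ) : ℝ :=
  Finset.univ.sup' (Finset.univ_nonempty_iff.mpr ⟨⟨0, hK⟩⟩) (fun k => sg h θt k z)

lemma sg_le_sF (k : Fin K) (z : ℝ) : sg h θt k z ≤ sF hK h θt z := by
  unfold sF
  exact Finset.le_sup' (fun k => sg h θt k z) (Finset.mem_univ k)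

lemma sMne (z : ℝ) :
    (Finset.univ.filter (fun k => sF hK h θt z ≤ sg h θt k z)).Nonempty := by
  obtain ⟨i, _, hi⟩ := Finset.exists_mem_eq_sup'
    (Finset.univ_nonempty_iff.mpr ⟨⟨0, hK⟩⟩) (fun k => sg h θt k z)
  exact ⟨i, Finset.mem_filter.2 ⟨Finset.mem_univ _, le_of_eq hi⟩⟩

noncomputable def sM (z : ℝ) : Fin K :=
  (Finset.univ.filter (fun k => sF hK h θt z ≤ sg h θt k z)).max' (sMne hK h θt z)

lemma sF_eq (z : ℝ) : sF hK h θt z = sg h θt (sM hK h θt z) z := by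
  have hmem := Finset.max'_mem _ (sMne hK h θt z)
  exact le_antisymm (Finset.mem_filter.1 hmem).2 (sg_le_sF hK h θt _ z)

lemma sM_mono (hh : ∀ k, 0 < h k) (hmono : ∀ j k : Fin K, j ≤ k → h k ≤ h j)
    (hθt0 : ∀ k, 0 ≤ θt k) {z1 z2 : ℝ} (hz1 : 0 ≤ z1) (hz12 : z1 ≤ z2) :
    sM hK h θt z1 ≤ sM hK h θt z2 := by
  by_contra hcon
  push_neg at hcon
  set k := sM hK h θt z1 with hk
  set j := sM hK h θt z2 with hj
  have hjk : j ≤ k := le_of_lt hcon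
  have h1 : sg h θt j z1 ≤ sg h θt k z1 := by
    calc sg h θt j z1 ≤ sF hK h θt z1 := sg_le_sF hK h θt j z1
    _ = sg h θt k z1 := sF_eq hK h θt z1
  have h2 : sg h θt j z2 ≤ sg h θt k z2 := by
    have hab : 1 / h j ≤ 1 / h k :=
      one_div_le_one_div_of_le (hh k) (hmono j k hjk)
    exact stmt17_cross (one_div_pos.2 (hh j)) hab (hθt0 j) (hθt0 k) hz1 hz12 h1
  have hkmem : k ∈ Finset.univ.filter (fun i => sF hK h θt z2 ≤ sg h θt i z2) := by
    refine Finset.mem_filter.2 ⟨Finset.mem_univ _, ?_⟩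
    calc sF hK h θt z2 = sg h θt j z2 := sF_eq hK h θt z2
    _ ≤ sg h θt k z2 := h2
  exact absurd (Finset.le_max' _ _ hkmem) (not_le.2 hcon)

noncomputable def sw (P : ℝ) (n : ℕ) : ℝ :=
  sSup ({0} ∪ {z | z ∈ Set.Icc 0 P ∧ ((sM hK h θt z : Fin K) : ℕ) < n})

variable {P : ℝ}

lemma sw_bddAbove (hP : 0 < P) (n : ℕ) :
    BddAbove ({0} ∪ {z | z ∈ Set.Icc 0 P ∧ ((sM hK h θt z : Fin K) : ℕ) < n}) := by
  refine ⟨P, ?_⟩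
  rintro y (rfl | ⟨hy, _⟩)
  · exact le_of_lt hP
  · exact hy.2

lemma sw_setne (n : ℕ) :
    (({0} : Set ℝ) ∪ {z | z ∈ Set.Icc 0 P ∧ ((sM hK h θt z : Fin K) : ℕ) < n}).Nonempty :=
  ⟨0, Or.inl rfl⟩

lemma sw_nonneg (hP : 0 < P) (n : ℕ) : 0 ≤ sw hK h θt P n := by
  unfold sw
  exact le_csSup (sw_bddAbove hK h θt hP n) (Or.inl rfl)

lemma sw_le_P (hP : 0 < P) (n : ℕ) : sw hK h θt P n ≤ P := by
  unfold sw
  apply csSup_le (sw_setne hK h θt _)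
  rintro y (rfl | ⟨hy, _⟩)
  · exact le_of_lt hP
  · exact hy.2

lemma sw_mono (hP : 0 < P) {n m : ℕ} (hnm : n ≤ m) : sw hK h θt P n ≤ sw hK h θt P m := by
  unfold sw
  apply csSup_le_csSup (sw_bddAbove hK h θt hP m) (sw_setne hK h θt n)
  rintro y (rfl | ⟨hy, hy2⟩)
  · exact Or.inl rfl
  · exact Or.inr ⟨hy, lt_of_lt_of_le hy2 hnm⟩

lemma sw_zero (hP : 0 < P) : sw hK h θt P 0 = 0 := by
  apply le_antisymm
  · unfold sw
    apply csSup_le (sw_setne hK h θt _)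
    rintro y (rfl | ⟨_, hy2⟩)
    · exact le_rfl
    · exact absurd hy2 (Nat.not_lt_zero _)
  · exact sw_nonneg hK h θt hP 0

lemma sw_K (hP : 0 < P) : sw hK h θt P K = P := by
  apply le_antisymm (sw_le_P hK h θt hP K)
  unfold sw
  exact le_csSup (sw_bddAbove hK h θt hP K)
    (Or.inr ⟨⟨le_of_lt hP, le_rfl⟩, (sM hK h θt P).isLt⟩)

lemma sM_loc (hP : 0 < P) (hh : ∀ k, 0 < h k) (hmono : ∀ j k : Fin K, j ≤ k → h k ≤ h j)
    (hθt0 : ∀ k, 0 ≤ θt k) {n : ℕ} (hn : n < K) {z : ℝ}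
    (h1 : sw hK h θt P n < z) (h2 : z < sw hK h θt P (n + 1)) :
    sM hK h θt z = ⟨n, hn⟩ := by
  have hz0 : 0 ≤ z := le_trans (sw_nonneg hK h θt hP n) (le_of_lt h1)
  have hzP : z ≤ P := le_trans (le_of_lt h2) (sw_le_P hK h θt hP (n+1))
  have hge : n ≤ ((sM hK h θt z : Fin K) : ℕ) := by
    by_contra hcon
    push_neg at hcon
    have hle' : z ≤ sw hK h θt P n := by
      unfold sw
      exact le_csSup (sw_bddAbove hK h θt hP n) (Or.inr ⟨⟨hz0, hzP⟩, hcon⟩)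
    linarith
  have hle : ((sM hK h θt z : Fin K) : ℕ) ≤ n := by
    rw [sw] at h2
    obtain ⟨y, hy, hzy⟩ := exists_lt_of_lt_csSup (sw_setne hK h θt (n+1)) h2
    rcases hy with rfl | ⟨hy1, hy2⟩
    · linarith [sw_nonneg hK h θt hP n]
    · have hmm := sM_mono hK h θt hh hmono hθt0 hz0 (le_of_lt hzy)
      exact le_trans (Fin.le_def.1 hmm) (Nat.lt_succ_iff.1 hy2)
  exact Fin.ext (le_antisymm hle hge)

end stmt17aux

noncomputable def sRk {K : ℕ} (hK : 1 ≤ K) (h θt : Fin K → ℝ) (P : ℝ) (k : Fin K) : ℝ :=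
  Real.log ((1 + h k * sw hK h θt P ((k : ℕ) + 1)) / (1 + h k * sw hK h θt P (k : ℕ)))

noncomputable def sFn {K : ℕ} (hK : 1 ≤ K) (h θt : Fin K → ℝ) (P : ℝ) (i : ℕ) : ℝ :=
  if hi : i < K then θt ⟨i, hi⟩ * sRk hK h θt P ⟨i, hi⟩ else 0

theorem stmt17 (K : ℕ) (hK : 1 ≤ K) (P : ℝ) (hP : 0 < P)
    (h : Fin K → ℝ) (hh : ∀ k, 0 < h k)
    (hmono : ∀ j k : Fin K, j ≤ k → h k ≤ h j)
    (θ : Finset (Fin K) → ℝ) (hθ : ∀ J : Finset (Fin K), J.Nonempty → 0 ≤ θ J)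
    (θt : Fin K → ℝ)
    (hθt : ∀ k : Fin K,
      IsGreatest {x : ℝ | ∃ J : Finset (Fin K),
        J.max = (k : WithBot (Fin K)) ∧ θ J = x} (θt k)) :
    sSup ((fun r : Finset (Fin K) → ℝ =>
        ∑ J ∈ Finset.univ.filter (fun J : Finset (Fin K) => J.Nonempty),
          θ J * r J) ''
      {r | (∀ J : Finset (Fin K), J.Nonempty → 0 ≤ r J) ∧
        ∃ p : Fin K → ℝ, (∀ k, 0 ≤ p k) ∧ (∑ k, p k) ≤ P ∧
          ∀ k : Fin K,
            (∑ J ∈ Finset.univ.filter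
                (fun J : Finset (Fin K) => J.max = (k : WithBot (Fin K))), r J)
              ≤ Real.log ((1 + h k * ∑ j ∈ Finset.univ.filter (· ≤ k), p j) /
                  (1 + h k * ∑ j ∈ Finset.univ.filter (· < k), p j))})
    = ∫ z in (0 : ℝ)..P,
        Finset.univ.sup' (Finset.univ_nonempty_iff.mpr ⟨⟨0, hK⟩⟩)
          (fun k => θt k / (1 / h k + z)) := by
  classical
  -- basic facts
  have hθt0 : ∀ k, 0 ≤ θt k := by
    intro k
    have h1 : θ {k} ≤ θt k := (hθt k).2 ⟨{k}, Finset.max_singleton, rfl⟩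
    exact le_trans (hθ {k} (Finset.singleton_nonempty k)) h1
  have hθtub : ∀ (k : Fin K) (J : Finset (Fin K)),
      J.max = (k : WithBot (Fin K)) → θ J ≤ θt k :=
    fun k J hJ => (hθt k).2 ⟨J, hJ, rfl⟩
  have hgcont : ∀ k : Fin K, ContinuousOn (sg h θt k) (Set.Icc 0 P) := by
    intro k
    unfold sg
    apply ContinuousOn.div continuousOn_const (by fun_prop)
    intro x hx
    have := hh k
    have hx0 : (0:ℝ) ≤ x := hx.1
    positivity
  have hFcont : ContinuousOn (sF hK h θt) (Set.Icc 0 P) := by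
    unfold sF
    exact ContinuousOn.finset_sup'_apply _ (fun k _ => hgcont k)
  have hgint : ∀ (k : Fin K) (a b : ℝ), a ∈ Set.Icc 0 P → b ∈ Set.Icc 0 P →
      IntervalIntegrable (sg h θt k) MeasureTheory.volume a b := by
    intro k a b ha hb
    apply ((hgcont k).mono ?_).intervalIntegrable
    exact Set.uIcc_subset_Icc ha hb
  have hFint : ∀ a b : ℝ, a ∈ Set.Icc 0 P → b ∈ Set.Icc 0 P →
      IntervalIntegrable (sF hK h θt) MeasureTheory.volume a b := by
    intro a b ha hb
    apply (hFcont.mono ?_).intervalIntegrable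
    exact Set.uIcc_subset_Icc ha hb
  have hg0 : ∀ (k : Fin K) (z : ℝ), 0 ≤ z → 0 ≤ sg h θt k z := by
    intro k z hz
    unfold sg
    have := hh k
    have := hθt0 k
    positivity
  have hF0 : ∀ z : ℝ, 0 ≤ z → 0 ≤ sF hK h θt z :=
    fun z hz => le_trans (hg0 ⟨0, hK⟩ z hz) (sg_le_sF hK h θt _ z)
  -- the partition of nonempty sets by their max
  have hpart : Finset.univ.filter (fun J : Finset (Fin K) => J.Nonempty)
      = Finset.univ.biUnion (fun k : Fin K =>
          Finset.univ.filter (fun J : Finset (Fin K) => J.max = (k : WithBot (Fin K)))) := by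
    ext J
    simp only [Finset.mem_filter, Finset.mem_univ, true_and, Finset.mem_biUnion]
    constructor
    · intro hJ
      obtain ⟨b, hb⟩ := Finset.max_of_nonempty hJ
      exact ⟨b, hb⟩
    · rintro ⟨b, hb⟩
      rw [Finset.nonempty_iff_ne_empty]
      intro hcon
      rw [hcon] at hb
      simp at hb
  have hdisj : ∀ k1 ∈ (Finset.univ : Finset (Fin K)), ∀ k2 ∈ Finset.univ, k1 ≠ k2 →
      Disjoint (Finset.univ.filter (fun J : Finset (Fin K) => J.max = (k1 : WithBot (Fin K))))
        (Finset.univ.filter (fun J : Finset (Fin K) => J.max = (k2 : WithBot (Fin K)))) := by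
    intro k1 _ k2 _ hne
    rw [Finset.disjoint_left]
    intro J hJ1 hJ2
    rw [Finset.mem_filter] at hJ1 hJ2
    apply hne
    have hcc : (k1 : WithBot (Fin K)) = k2 := hJ1.2.symm.trans hJ2.2
    exact WithBot.coe_inj.1 hcc
  -- facts about the partition points
  have hW0 : ∀ n, 0 ≤ sw hK h θt P n := sw_nonneg hK h θt hP
  have hWP : ∀ n, sw hK h θt P n ≤ P := sw_le_P hK h θt hP
  have hWm : ∀ {n m : ℕ}, n ≤ m → sw hK h θt P n ≤ sw hK h θt P m :=
    fun hnm => sw_mono hK h θt hP hnm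
  -- the integral of sF over each cell of the partition
  have hfw : ∀ (n : ℕ) (hn : n < K),
      (∫ z in (sw hK h θt P n)..(sw hK h θt P (n+1)), sF hK h θt z)
        = θt ⟨n, hn⟩ * sRk hK h θt P ⟨n, hn⟩ := by
    intro n hn
    have hw1 : sw hK h θt P n ≤ sw hK h θt P (n+1) := hWm (Nat.le_succ n)
    have e1 : (∫ z in (sw hK h θt P n)..(sw hK h θt P (n+1)), sF hK h θt z)
        = ∫ z in (sw hK h θt P n)..(sw hK h θt P (n+1)), sg h θt ⟨n, hn⟩ z := by
      apply intervalIntegral.integral_congr_ae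
      rw [MeasureTheory.ae_iff]
      refine MeasureTheory.measure_mono_null (t := ({sw hK h θt P (n+1)} : Set ℝ)) ?_
        (MeasureTheory.measure_singleton _)
      intro x hx
      simp only [Set.mem_setOf_eq, Classical.not_imp] at hx
      obtain ⟨hxI, hxne⟩ := hx
      rw [Set.uIoc_of_le hw1] at hxI
      rcases eq_or_lt_of_le hxI.2 with heq | hlt
      · exact heq
      · exfalso
        apply hxne
        have hloc := sM_loc hK h θt hP hh hmono hθt0 hn hxI.1 hlt
        rw [sF_eq hK h θt x, hloc]
    rw [e1]
    have e2 : (∫ z in (sw hK h θt P n)..(sw hK h θt P (n+1)), sg h θt ⟨n, hn⟩ z)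
        = θt ⟨n, hn⟩ * (Real.log (1 / h ⟨n, hn⟩ + sw hK h θt P (n+1))
            - Real.log (1 / h ⟨n, hn⟩ + sw hK h θt P n)) := by
      have hi := stmt17_int (t := θt ⟨n, hn⟩) (one_div_pos.2 (hh ⟨n, hn⟩)) (hW0 n) (hW0 (n+1))
      unfold sg
      exact hi
    rw [e2]
    unfold sRk
    rw [stmt17_logdiv (hh ⟨n, hn⟩) (hW0 n) (hW0 (n+1))]
  -- the full integral as a finite sum
  have hint_eq : (∫ z in (0:ℝ)..P, sF hK h θt z)
      = ∑ k : Fin K, θt k * sRk hK h θt P k := by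
    have hsp := stmt17_split (sF hK h θt) hFcont K (sw hK h θt P) (fun n _ => ⟨hW0 n, hWP n⟩)
    rw [sw_zero hK h θt hP, sw_K hK h θt hP] at hsp
    rw [← hsp]
    have hsum1 : ∑ k : Fin K, θt k * sRk hK h θt P k
        = ∑ i ∈ Finset.range K, sFn hK h θt P i := by
      rw [← Fin.sum_univ_eq_sum_range (fun i => sFn hK h θt P i) K]
      apply Finset.sum_congr rfl
      intro k _
      simp [sFn, k.isLt]
    rw [hsum1]
    apply Finset.sum_congr rfl
    intro i hi
    rw [Finset.mem_range] at hi
    rw [hfw i hi]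
    simp [sFn, hi]
  -- chosen maximizing subsets
  choose Jc hJc1 hJc2 using fun k : Fin K => (hθt k).1
  have hJcne : ∀ k : Fin K, (Jc k).Nonempty := by
    intro k
    rw [Finset.nonempty_iff_ne_empty]
    intro hc
    have h1 := hJc1 k
    rw [hc] at h1
    simp at h1
  have hRk0 : ∀ k : Fin K, 0 ≤ sRk hK h θt P k := by
    intro k
    unfold sRk
    apply Real.log_nonneg
    rw [one_le_div (show (0:ℝ) < 1 + h k * sw hK h θt P (k:ℕ) by
      nlinarith [hh k, hW0 (k:ℕ)])]
    nlinarith [mul_le_mul_of_nonneg_left (hWm (Nat.le_succ (k:ℕ))) (le_of_lt (hh k))]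
  have hfilter_le : ∀ k : Fin K, Finset.univ.filter (· ≤ k)
      = Finset.univ.filter (fun j : Fin K => (j:ℕ) < (k:ℕ)+1) := by
    intro k; ext j
    simp only [Finset.mem_filter, Finset.mem_univ, true_and, Fin.le_def, Nat.lt_succ_iff]
  have hfilter_lt : ∀ k : Fin K, Finset.univ.filter (· < k)
      = Finset.univ.filter (fun j : Fin K => (j:ℕ) < (k:ℕ)) := by
    intro k; ext j
    simp only [Finset.mem_filter, Finset.mem_univ, true_and, Fin.lt_def]
  -- the main claim: the integral is the greatest element of the image set
  have Hg : IsGreatest ((fun r : Finset (Fin K) → ℝ =>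
        ∑ J ∈ Finset.univ.filter (fun J : Finset (Fin K) => J.Nonempty),
          θ J * r J) ''
      {r | (∀ J : Finset (Fin K), J.Nonempty → 0 ≤ r J) ∧
        ∃ p : Fin K → ℝ, (∀ k, 0 ≤ p k) ∧ (∑ k, p k) ≤ P ∧
          ∀ k : Fin K,
            (∑ J ∈ Finset.univ.filter
                (fun J : Finset (Fin K) => J.max = (k : WithBot (Fin K))), r J)
              ≤ Real.log ((1 + h k * ∑ j ∈ Finset.univ.filter (· ≤ k), p j) /
                  (1 + h k * ∑ j ∈ Finset.univ.filter (· < k), p j))})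
      (∫ z in (0:ℝ)..P, sF hK h θt z) := by
    constructor
    · -- achievability
      refine ⟨fun J => ∑ k : Fin K, if J = Jc k then sRk hK h θt P k else 0, ⟨?_, ?_⟩, ?_⟩
      · intro J _
        apply Finset.sum_nonneg
        intro k _
        split
        · exact hRk0 k
        · exact le_rfl
      · refine ⟨fun k => sw hK h θt P ((k:ℕ)+1) - sw hK h θt P (k:ℕ),
          fun k => sub_nonneg.2 (hWm (Nat.le_succ _)), ?_, ?_⟩
        · have h1 : Finset.univ.filter (fun j : Fin K => (j:ℕ) < K) = Finset.univ :=
            Finset.filter_true_of_mem (fun j _ => j.isLt)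
          have h2 := stmt17_tele (K := K) (sw hK h θt P) K le_rfl
          rw [h1, sw_zero hK h θt hP, sw_K hK h θt hP] at h2
          simpa using h2.le
        · intro k
          have hL : (∑ J ∈ Finset.univ.filter
                (fun J : Finset (Fin K) => J.max = (k : WithBot (Fin K))),
              ∑ k' : Fin K, if J = Jc k' then sRk hK h θt P k' else 0)
              = sRk hK h θt P k := by
            rw [Finset.sum_comm]
            have hone : ∀ k' : Fin K, (∑ J ∈ Finset.univ.filter
                (fun J : Finset (Fin K) => J.max = (k : WithBot (Fin K))),
                  if J = Jc k' then sRk hK h θt P k' else 0)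
                = if k' = k then sRk hK h θt P k' else 0 := by
              intro k'
              rw [Finset.sum_ite_eq' (Finset.univ.filter
                (fun J : Finset (Fin K) => J.max = (k : WithBot (Fin K)))) (Jc k')
                (fun _ => sRk hK h θt P k')]
              rcases eq_or_ne k' k with rfl | hne
              · rw [if_pos (Finset.mem_filter.2 ⟨Finset.mem_univ (Jc k'), hJc1 k'⟩), if_pos rfl]
              · rw [if_neg, if_neg hne]
                intro hmem
                rw [Finset.mem_filter] at hmem
                exact hne (WithBot.coe_inj.1 ((hJc1 k').symm.trans hmem.2))
            rw [Finset.sum_congr rfl (fun k' _ => hone k'),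
              Finset.sum_ite_eq' Finset.univ k (fun k' => sRk hK h θt P k'),
              if_pos (Finset.mem_univ k)]
          rw [hL]
          have hle := stmt17_tele (K := K) (sw hK h θt P) ((k:ℕ)+1) k.isLt
          have hlt := stmt17_tele (K := K) (sw hK h θt P) (k:ℕ) (le_of_lt k.isLt)
          rw [sw_zero hK h θt hP] at hle hlt
          rw [hfilter_le k, hfilter_lt k, hle, hlt]
          unfold sRk
          simp
      · -- the value of the objective
        show (∑ J ∈ Finset.univ.filter (fun J : Finset (Fin K) => J.Nonempty),
            θ J * ∑ k : Fin K, if J = Jc k then sRk hK h θt P k else 0)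
          = ∫ z in (0:ℝ)..P, sF hK h θt z
        rw [hint_eq]
        calc (∑ J ∈ Finset.univ.filter (fun J : Finset (Fin K) => J.Nonempty),
            θ J * ∑ k : Fin K, if J = Jc k then sRk hK h θt P k else 0)
            = ∑ J ∈ Finset.univ.filter (fun J : Finset (Fin K) => J.Nonempty),
              ∑ k : Fin K, if J = Jc k then θ J * sRk hK h θt P k else 0 := by
              apply Finset.sum_congr rfl
              intro J _
              rw [Finset.mul_sum]
              apply Finset.sum_congr rfl
              intro k _
              rw [mul_ite, mul_zero]
          _ = ∑ k : Fin K, ∑ J ∈ Finset.univ.filter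
                (fun J : Finset (Fin K) => J.Nonempty),
                if J = Jc k then θ J * sRk hK h θt P k else 0 := Finset.sum_comm
          _ = ∑ k : Fin K, θt k * sRk hK h θt P k := by
              apply Finset.sum_congr rfl
              intro k _
              rw [Finset.sum_ite_eq' (Finset.univ.filter
                  (fun J : Finset (Fin K) => J.Nonempty)) (Jc k)
                  (fun J => θ J * sRk hK h θt P k),
                if_pos (Finset.mem_filter.2 ⟨Finset.mem_univ _, hJcne k⟩), hJc2 k]
    · -- upper bound
      rintro x ⟨r, ⟨hr0, p, hp0, hpsum, hrate⟩, rfl⟩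
      show (∑ J ∈ Finset.univ.filter (fun J : Finset (Fin K) => J.Nonempty),
          θ J * r J) ≤ ∫ z in (0:ℝ)..P, sF hK h θt z
      set Bp : ℕ → ℝ := fun n => ∑ j ∈ Finset.univ.filter
        (fun j : Fin K => (j:ℕ) < n), p j with hBp
      have hBpmono : ∀ {n m : ℕ}, n ≤ m → Bp n ≤ Bp m := by
        intro n m hnm
        simp only [hBp]
        apply Finset.sum_le_sum_of_subset_of_nonneg
        · intro j hj
          simp only [Finset.mem_filter] at hj ⊢
          exact ⟨hj.1, lt_of_lt_of_le hj.2 hnm⟩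
        · exact fun i _ _ => hp0 i
      have hBp0 : Bp 0 = 0 := by simp [hBp]
      have hBpKk : Bp K = ∑ k, p k := by
        simp only [hBp]
        rw [Finset.filter_true_of_mem (fun j _ => j.isLt)]
      have hBpnn : ∀ n, 0 ≤ Bp n := by
        intro n
        simp only [hBp]
        exact Finset.sum_nonneg (fun i _ => hp0 i)
      have hBpP : ∀ n, n ≤ K → Bp n ≤ P := by
        intro n hn
        calc Bp n ≤ Bp K := hBpmono hn
        _ = ∑ k, p k := hBpKk
        _ ≤ P := hpsum
      have hBpmem : ∀ n, n ≤ K → Bp n ∈ Set.Icc (0:ℝ) P :=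
        fun n hn => ⟨hBpnn n, hBpP n hn⟩
      have hBle : ∀ k : Fin K, (∑ j ∈ Finset.univ.filter (· ≤ k), p j) = Bp ((k:ℕ)+1) := by
        intro k
        rw [hfilter_le k]
      have hBlt : ∀ k : Fin K, (∑ j ∈ Finset.univ.filter (· < k), p j) = Bp (k:ℕ) := by
        intro k
        rw [hfilter_lt k]
      calc (∑ J ∈ Finset.univ.filter (fun J : Finset (Fin K) => J.Nonempty), θ J * r J)
          = ∑ k : Fin K, ∑ J ∈ Finset.univ.filter
              (fun J : Finset (Fin K) => J.max = (k : WithBot (Fin K))), θ J * r J := by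
            rw [hpart, Finset.sum_biUnion hdisj]
        _ ≤ ∑ k : Fin K, θt k * ∑ J ∈ Finset.univ.filter
              (fun J : Finset (Fin K) => J.max = (k : WithBot (Fin K))), r J := by
            apply Finset.sum_le_sum
            intro k _
            rw [Finset.mul_sum]
            apply Finset.sum_le_sum
            intro J hJ
            rw [Finset.mem_filter] at hJ
            have hJne : J.Nonempty := by
              rw [Finset.nonempty_iff_ne_empty]
              intro hc
              rw [hc] at hJ
              simp at hJ
            exact mul_le_mul_of_nonneg_right (hθtub k J hJ.2) (hr0 J hJne)
        _ ≤ ∑ k : Fin K, θt k *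
              Real.log ((1 + h k * ∑ j ∈ Finset.univ.filter (· ≤ k), p j) /
                (1 + h k * ∑ j ∈ Finset.univ.filter (· < k), p j)) :=
            Finset.sum_le_sum (fun k _ => mul_le_mul_of_nonneg_left (hrate k) (hθt0 k))
        _ = ∑ k : Fin K, ∫ z in (Bp (k:ℕ))..(Bp ((k:ℕ)+1)), sg h θt k z := by
            apply Finset.sum_congr rfl
            intro k _
            rw [hBle k, hBlt k,
              stmt17_logdiv (hh k) (hBpnn (k:ℕ)) (hBpnn ((k:ℕ)+1))]
            unfold sg
            exact (stmt17_int (one_div_pos.2 (hh k)) (hBpnn (k:ℕ)) (hBpnn ((k:ℕ)+1))).symm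
        _ ≤ ∑ k : Fin K, ∫ z in (Bp (k:ℕ))..(Bp ((k:ℕ)+1)), sF hK h θt z := by
            apply Finset.sum_le_sum
            intro k _
            apply intervalIntegral.integral_mono_on (hBpmono (Nat.le_succ _))
              (hgint k _ _ (hBpmem _ (le_of_lt k.isLt)) (hBpmem _ k.isLt))
              (hFint _ _ (hBpmem _ (le_of_lt k.isLt)) (hBpmem _ k.isLt))
            intro x _
            exact sg_le_sF hK h θt k x
        _ = ∑ i ∈ Finset.range K, ∫ z in (Bp i)..(Bp (i+1)), sF hK h θt z :=
            Fin.sum_univ_eq_sum_range (fun i => ∫ z in (Bp i)..(Bp (i+1)), sF hK h θt z) K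
        _ = ∫ z in (0:ℝ)..(Bp K), sF hK h θt z := by
            have hsp := stmt17_split (sF hK h θt) hFcont K Bp
              (fun n hn => ⟨hBpnn n, hBpP n hn⟩)
            rw [hBp0] at hsp
            exact hsp
        _ ≤ ∫ z in (0:ℝ)..P, sF hK h θt z := by
            rw [← intervalIntegral.integral_add_adjacent_intervals
              (hFint 0 (Bp K) (Set.left_mem_Icc.2 (le_of_lt hP)) (hBpmem K le_rfl))
              (hFint (Bp K) P (hBpmem K le_rfl) (Set.right_mem_Icc.2 (le_of_lt hP)))]
            have hnn : 0 ≤ ∫ z in (Bp K)..P, sF hK h θt z :=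
              intervalIntegral.integral_nonneg (hBpP K le_rfl)
                (fun u hu => hF0 u (le_trans (hBpnn K) hu.1))
            linarith
  rw [Hg.csSup_eq]
  rfl
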